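/- With the notation above, there is a constant c > 0 such that the Lebesgue measure of the interval I_n = {φ = n} ⊂ (1/2,1] satisfies |I_n| ∼ c/n^{β+1} as n → ∞, where β = 1/α. -/

import Mathlib

open Set MeasureTheory Filter

noncomputable def gPM (α : ℝ) (x : ℝ) : ℝ := x + 2 ^ α * x ^ (1 + α)

lemma gPM_zero (α : ℝ) (hα : 0 < α) : gPM α 0 = 0 := by
  simp [gPM, Real.zero_rpow (by positivity : (1:ℝ) + α ≠ 0)]

lemma gPM_cont (α : ℝ) (hα : 0 < α) : Continuous (gPM α) := by
  refine continuous_id.add (continuous_const.mul ?_)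
  rw [continuous_iff_continuousAt]
  exact fun x => Real.continuousAt_rpow_const x _ (Or.inr (by positivity))

lemma gPM_mono (α : ℝ) (hα : 0 < α) : StrictMonoOn (gPM α) (Set.Ici 0) := by
  intro x hx y hy hxy
  have : x ^ (1+α) < y ^ (1+α) := Real.rpow_lt_rpow hx hxy (by positivity)
  have h2 : (0:ℝ) < 2 ^ α := by positivity
  unfold gPM; nlinarith

lemma gPM_gt (α : ℝ) (hα : 0 < α) {t : ℝ} (ht : 0 < t) : t < gPM α t := by
  have : (0:ℝ) < 2 ^ α * t ^ (1+α) := by positivity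
  unfold gPM; linarith

lemma gPM_root (α : ℝ) (hα : 0 < α) {t : ℝ} (ht : 0 < t) :
    ∃ x, 0 < x ∧ x < t ∧ gPM α x = t := by
  have h := intermediate_value_Ioo (le_of_lt ht) ((gPM_cont α hα).continuousOn (s := Set.Icc 0 t))
  have htm : t ∈ Set.Ioo (gPM α 0) (gPM α t) := by
    rw [gPM_zero α hα]; exact ⟨ht, gPM_gt α hα ht⟩
  obtain ⟨x, hx, hgx⟩ := h htm
  exact ⟨x, hx.1, hx.2, hgx⟩

noncomputable def wS (α : ℝ) (hα : 0 < α) : ℕ → {x : ℝ // 0 < x ∧ x ≤ 1}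
  | 0 => ⟨1, one_pos, le_refl 1⟩
  | n+1 => ⟨(gPM_root α hα (wS α hα n).2.1).choose,
      (gPM_root α hα (wS α hα n).2.1).choose_spec.1,
      le_of_lt (lt_of_lt_of_le (gPM_root α hα (wS α hα n).2.1).choose_spec.2.1 (wS α hα n).2.2)⟩

noncomputable def w (α : ℝ) (hα : 0 < α) (n : ℕ) : ℝ := (wS α hα n).1

lemma w_pos (α : ℝ) (hα : 0 < α) (n : ℕ) : 0 < w α hα n := (wS α hα n).2.1
lemma w_le_one (α : ℝ) (hα : 0 < α) (n : ℕ) : w α hα n ≤ 1 := (wS α hα n).2.2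
lemma w_zero (α : ℝ) (hα : 0 < α) : w α hα 0 = 1 := rfl
lemma w_lt (α : ℝ) (hα : 0 < α) (n : ℕ) : w α hα (n+1) < w α hα n :=
  (gPM_root α hα (wS α hα n).2.1).choose_spec.2.1
lemma gPM_w (α : ℝ) (hα : 0 < α) (n : ℕ) : gPM α (w α hα (n+1)) = w α hα n :=
  (gPM_root α hα (wS α hα n).2.1).choose_spec.2.2

lemma w_anti (α : ℝ) (hα : 0 < α) : StrictAnti (w α hα) :=
  strictAnti_nat_of_succ_lt (w_lt α hα)

lemma gPM_half (α : ℝ) (hα : 0 < α) : gPM α (1/2) = 1 := by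
  have h1 : ((1:ℝ)/2) ^ (1+α) = ((2:ℝ) ^ (1+α))⁻¹ := by
    rw [one_div, Real.inv_rpow (by norm_num)]
  have h2 : (2:ℝ) ^ (1+α) = 2 * 2 ^ α := by
    rw [Real.rpow_add (by norm_num), Real.rpow_one]
  have h3 : (0:ℝ) < 2 ^ α := by positivity
  rw [gPM, h1, h2]
  field_simp
  ring

lemma w_one (α : ℝ) (hα : 0 < α) : w α hα 1 = 1/2 := by
  refine (gPM_mono α hα).injOn (le_of_lt (w_pos α hα 1) : w α hα 1 ∈ Set.Ici (0:ℝ))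
    (by norm_num : (1/2:ℝ) ∈ Set.Ici (0:ℝ)) ?_
  rw [gPM_w, gPM_half α hα, w_zero]

lemma w_le_half (α : ℝ) (hα : 0 < α) (n : ℕ) : w α hα (n+1) ≤ 1/2 := by
  rcases n with _ | m
  · exact le_of_eq (w_one α hα)
  · exact le_of_lt (lt_of_lt_of_le ((w_anti α hα) (by omega : 1 < m + 2)) (le_of_eq (w_one α hα)))

lemma w_tendsto_zero (α : ℝ) (hα : 0 < α) : Tendsto (w α hα) atTop (nhds 0) := by
  have hbdd : BddBelow (Set.range (w α hα)) := ⟨0, by rintro x ⟨n, rfl⟩; exact (w_pos α hα n).le⟩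
  have hconv := tendsto_atTop_ciInf (w_anti α hα).antitone hbdd
  set l := ⨅ n, w α hα n with hl
  have hl0 : 0 ≤ l := le_ciInf (fun n => (w_pos α hα n).le)
  have hshift : Tendsto (fun n => w α hα (n+1)) atTop (nhds l) :=
    (tendsto_add_atTop_iff_nat 1).mpr hconv
  have h2 : Tendsto (fun n => gPM α (w α hα (n+1))) atTop (nhds (gPM α l)) :=
    ((gPM_cont α hα).continuousAt).tendsto.comp hshift
  have h3 : Tendsto (fun n => gPM α (w α hα (n+1))) atTop (nhds l) := by
    simp only [gPM_w α hα]; exact hconv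
  have hgl : gPM α l = l := tendsto_nhds_unique h2 h3
  have hz : l = 0 := by
    by_contra h
    have hlpos : 0 < l := lt_of_le_of_ne hl0 (Ne.symm h)
    exact absurd hgl (ne_of_gt (gPM_gt α hα hlpos))
  rwa [hz] at hconv

lemma w_eq_mul (α : ℝ) (hα : 0 < α) (n : ℕ) :
    w α hα n = w α hα (n+1) * (1 + 2 ^ α * (w α hα (n+1)) ^ α) := by
  have h := gPM_w α hα n
  have hp := w_pos α hα (n+1)
  have h2 : (w α hα (n+1)) ^ (1+α) = w α hα (n+1) * (w α hα (n+1)) ^ α := by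
    rw [Real.rpow_add hp, Real.rpow_one]
  rw [gPM, h2] at h
  rw [← h]; ring

lemma d_tendsto (α : ℝ) (hα : 0 < α) :
    Tendsto (fun n => (w α hα (n+2)) ^ (-α) - (w α hα (n+1)) ^ (-α)) atTop
      (nhds (α * 2 ^ α)) := by
  set f : ℝ → ℝ := fun s => (1+s) ^ (-α) with hf
  have hd : HasDerivAt f (-α) 0 := by
    have h1 : HasDerivAt (fun s : ℝ => 1 + s) 1 0 := (hasDerivAt_id 0).const_add 1
    have h2 : HasDerivAt (fun x : ℝ => x ^ (-α)) (-α * ((1:ℝ)+0) ^ (-α-1)) ((1:ℝ)+0) :=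
      Real.hasDerivAt_rpow_const (Or.inl (by norm_num))
    have := h2.comp 0 h1
    simp only [add_zero, Real.one_rpow, mul_one] at this
    exact this
  have hslope : Tendsto (slope f 0) (nhdsWithin 0 {(0:ℝ)}ᶜ) (nhds (-α)) :=
    hasDerivAt_iff_tendsto_slope.mp hd
  set t : ℕ → ℝ := fun n => 2 ^ α * (w α hα (n+2)) ^ α with htdef
  have htpos : ∀ n, 0 < t n := fun n => by
    have := w_pos α hα (n+2); positivity
  have hwt : Tendsto (fun n => w α hα (n+2)) atTop (nhds 0) :=
    (tendsto_add_atTop_iff_nat 2).mpr (w_tendsto_zero α hα)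
  have hrc : ContinuousAt (fun x : ℝ => x ^ α) 0 :=
    Real.continuousAt_rpow_const 0 α (Or.inr hα.le)
  have ht0 : Tendsto t atTop (nhds 0) := by
    have h := (hrc.tendsto.comp hwt)
    rw [Real.zero_rpow hα.ne'] at h
    simpa using h.const_mul ((2:ℝ) ^ α)
  have ht0' : Tendsto t atTop (nhdsWithin 0 {(0:ℝ)}ᶜ) :=
    tendsto_nhdsWithin_of_tendsto_nhds_of_eventually_within _ ht0
      (Eventually.of_forall fun n => ne_of_gt (htpos n))
  have hcomp : Tendsto (fun n => slope f 0 (t n)) atTop (nhds (-α)) := hslope.comp ht0'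
  have hfinal := hcomp.const_mul (-(2:ℝ) ^ α)
  have heq : ∀ n, (-(2:ℝ) ^ α) * slope f 0 (t n)
      = (w α hα (n+2)) ^ (-α) - (w α hα (n+1)) ^ (-α) := by
    intro n
    have hp2 := w_pos α hα (n+2)
    have htp := htpos n
    have h1t : (0:ℝ) < 1 + t n := by linarith
    have hmul : (w α hα (n+1)) ^ (-α) = (w α hα (n+2)) ^ (-α) * (1 + t n) ^ (-α) := by
      rw [w_eq_mul α hα (n+1), Real.mul_rpow hp2.le h1t.le]
    have hinv : (w α hα (n+2)) ^ (-α) = 2 ^ α / t n := by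
      rw [Real.rpow_neg hp2.le, htdef]
      rw [eq_div_iff (ne_of_gt htp)]
      field_simp
      simp only [htdef]
      ring
    have hs : slope f 0 (t n) = ((1 + t n) ^ (-α) - 1) / t n := by
      rw [slope_def_field, hf]
      simp
    rw [hs, hmul, hinv]
    field_simp
    ring
  have : (fun n => (-(2:ℝ) ^ α) * slope f 0 (t n))
      = fun n => (w α hα (n+2)) ^ (-α) - (w α hα (n+1)) ^ (-α) := funext heq
  rw [this] at hfinal
  convert hfinal using 2
  ring

lemma v_div_tendsto (α : ℝ) (hα : 0 < α) :
    Tendsto (fun n : ℕ => (w α hα (n+1)) ^ (-α) / n) atTop (nhds (α * 2 ^ α)) := by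
  set v : ℕ → ℝ := fun n => (w α hα (n+1)) ^ (-α) with hv
  have hc := (d_tendsto α hα).cesaro
  have hsum : ∀ n : ℕ, ∑ i ∈ Finset.range n, (v (i+1) - v i) = v n - v 0 :=
    fun n => Finset.sum_range_sub v n
  have hc' : Tendsto (fun n : ℕ => (n:ℝ)⁻¹ * (v n - v 0)) atTop (nhds (α * 2 ^ α)) := by
    refine hc.congr fun n => ?_
    rw [← hsum n]
  have hz : Tendsto (fun n : ℕ => (n:ℝ)⁻¹ * v 0) atTop (nhds 0) := by
    simpa using (tendsto_inv_atTop_nhds_zero_nat).mul_const (v 0)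
  have := hc'.add hz
  rw [add_zero] at this
  refine this.congr fun n => ?_
  rw [div_eq_inv_mul]
  ring

lemma w_mul_rpow_tendsto (α : ℝ) (hα : 0 < α) :
    Tendsto (fun n : ℕ => w α hα (n+1) * (n:ℝ) ^ (1/α)) atTop
      (nhds ((α * 2 ^ α) ^ (-(1/α)))) := by
  have hA : (0:ℝ) < α * 2 ^ α := by positivity
  have hcont : ContinuousAt (fun x : ℝ => x ^ (-(1/α))) (α * 2 ^ α) :=
    Real.continuousAt_rpow_const _ _ (Or.inl hA.ne')
  have h := hcont.tendsto.comp (v_div_tendsto α hα)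
  refine h.congr' ?_
  filter_upwards [eventually_ge_atTop 1] with n hn
  have hnp : (0:ℝ) < (n:ℝ) := by exact_mod_cast hn
  have hwp := w_pos α hα (n+1)
  have hvp : (0:ℝ) ≤ (w α hα (n+1)) ^ (-α) := Real.rpow_nonneg hwp.le _
  show ((w α hα (n+1)) ^ (-α) / (n:ℝ)) ^ (-(1/α)) = w α hα (n+1) * (n:ℝ) ^ (1/α)
  rw [Real.div_rpow hvp hnp.le, ← Real.rpow_mul hwp.le]
  have : -α * -(1/α) = 1 := by field_simp
  rw [this, Real.rpow_one, Real.rpow_neg hnp.le, div_eq_mul_inv, inv_inv]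

lemma w_mul_rpow_tendsto2 (α : ℝ) (hα : 0 < α) :
    Tendsto (fun m : ℕ => w α hα (m+2) * ((m:ℝ)+2) ^ (1/α)) atTop
      (nhds ((α * 2 ^ α) ^ (-(1/α)))) := by
  have h1 : Tendsto (fun m : ℕ => w α hα (m+2) * ((m:ℝ)+1) ^ (1/α)) atTop
      (nhds ((α * 2 ^ α) ^ (-(1/α)))) := by
    have := (tendsto_add_atTop_iff_nat 1).mpr (w_mul_rpow_tendsto α hα)
    refine this.congr fun m => ?_
    push_cast
    ring_nf
  have hr : Tendsto (fun m : ℕ => (((m:ℝ)+2)/((m:ℝ)+1)) ^ (1/α)) atTop (nhds 1) := by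
    have hin : Tendsto (fun m : ℕ => ((m:ℝ)+2)/((m:ℝ)+1)) atTop (nhds 1) := by
      have h0 : Tendsto (fun m : ℕ => 1 + 1/((m:ℝ)+1)) atTop (nhds 1) := by
        simpa using (tendsto_one_div_add_atTop_nhds_zero_nat : Tendsto (fun n : ℕ => 1 / ((n:ℝ) + 1)) atTop (nhds 0)).const_add 1
      refine h0.congr fun m => ?_
      have : ((m:ℝ)+1) ≠ 0 := by positivity
      field_simp
      ring
    have hc : ContinuousAt (fun x : ℝ => x ^ (1/α)) 1 :=
      Real.continuousAt_rpow_const 1 _ (Or.inl one_ne_zero)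
    have := hc.tendsto.comp hin
    simpa [Real.one_rpow, Function.comp_def] using this
  have hprod := h1.mul hr
  rw [mul_one] at hprod
  refine hprod.congr fun m => ?_
  have hm1 : (0:ℝ) < (m:ℝ)+1 := by positivity
  have hm2 : (0:ℝ) ≤ (m:ℝ)+2 := by positivity
  rw [mul_assoc, ← Real.mul_rpow hm1.le (by positivity : (0:ℝ) ≤ ((m:ℝ)+2)/((m:ℝ)+1))]
  congr 2
  field_simp

section Dynamics

variable (α : ℝ) (hα : 0 < α) (T : ℝ → ℝ)

lemma T_eq_gPM (h1 : ∀ x ∈ Set.Ioc (0:ℝ) (1/2), T x = x * (1 + 2 ^ α * x ^ α))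
    {x : ℝ} (hx : x ∈ Set.Ioc (0:ℝ) (1/2)) : T x = gPM α x := by
  rw [h1 x hx, gPM, Real.rpow_add hx.1, Real.rpow_one]
  ring

lemma T_step (h1 : ∀ x ∈ Set.Ioc (0:ℝ) (1/2), T x = x * (1 + 2 ^ α * x ^ α))
    (k : ℕ) {x : ℝ} (hx : x ∈ Set.Ioc (w α hα (k+2)) (w α hα (k+1))) :
    T x ∈ Set.Ioc (w α hα (k+1)) (w α hα k) := by
  have hx0 : 0 < x := lt_trans (w_pos α hα (k+2)) hx.1
  have hxh : x ≤ 1/2 := le_trans hx.2 (w_le_half α hα k)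
  rw [T_eq_gPM α T h1 ⟨hx0, hxh⟩]
  constructor
  · calc w α hα (k+1) = gPM α (w α hα (k+2)) := (gPM_w α hα (k+1)).symm
      _ < gPM α x := gPM_mono α hα (w_pos α hα (k+2)).le hx0.le hx.1
  · calc gPM α x ≤ gPM α (w α hα (k+1)) :=
        (gPM_mono α hα).monotoneOn hx0.le (w_pos α hα (k+1)).le hx.2
      _ = w α hα k := gPM_w α hα k

lemma T_iter (h1 : ∀ x ∈ Set.Ioc (0:ℝ) (1/2), T x = x * (1 + 2 ^ α * x ^ α))
    (k : ℕ) : ∀ j, j ≤ k + 1 → ∀ x ∈ Set.Ioc (w α hα (k+2)) (w α hα (k+1)),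
      T^[j] x ∈ Set.Ioc (w α hα (k+2-j)) (w α hα (k+1-j)) := by
  intro j
  induction j with
  | zero => intro _ x hx; simpa using hx
  | succ j ih =>
    intro hj x hx
    have hj' : j ≤ k := by omega
    have hmem := ih (by omega) x hx
    have e1 : k + 2 - j = (k - j) + 2 := by omega
    have e2 : k + 1 - j = (k - j) + 1 := by omega
    rw [e1, e2] at hmem
    have hstep := T_step α hα T h1 (k - j) hmem
    rw [Function.iterate_succ_apply']
    have e3 : k + 2 - (j+1) = (k - j) + 1 := by omega
    have e4 : k + 1 - (j+1) = k - j := by omega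
    rw [e3, e4]
    exact hstep

lemma phi_eq (h1 : ∀ x ∈ Set.Ioc (0:ℝ) (1/2), T x = x * (1 + 2 ^ α * x ^ α))
    (φ : ℝ → ℕ)
    (hφ : ∀ y ∈ Set.Ioc (1/2:ℝ) 1,
      φ y = sInf {n : ℕ | 1 ≤ n ∧ T^[n] y ∈ Set.Ioc (1/2:ℝ) 1})
    (m : ℕ) {y : ℝ} (hy : y ∈ Set.Ioc (1/2:ℝ) 1)
    (hTy : T y ∈ Set.Ioc (w α hα (m+1)) (w α hα m)) : φ y = m + 1 := by
  rw [hφ y hy]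
  have hS : T^[m+1] y ∈ Set.Ioc (1/2:ℝ) 1 := by
    rcases m with _ | k
    · rw [Function.iterate_one]
      rw [w_one α hα, w_zero α hα] at hTy
      exact hTy
    · rw [Function.iterate_succ_apply]
      have := T_iter α hα T h1 k (k+1) le_rfl (T y) hTy
      have e1 : k + 2 - (k+1) = 1 := by omega
      have e2 : k + 1 - (k+1) = 0 := by omega
      rw [e1, e2, w_one α hα, w_zero α hα] at this
      exact this
  apply le_antisymm
  · exact Nat.sInf_le ⟨by omega, hS⟩
  · refine le_csInf ⟨m+1, by omega, hS⟩ ?_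
    rintro p ⟨hp1, hpS⟩
    by_contra hlt
    push_neg at hlt
    -- p ≤ m, p ≥ 1, so m = k+1 with p = q+1, q ≤ k
    obtain ⟨k, rfl⟩ : ∃ k, m = k + 1 := ⟨m - 1, by omega⟩
    obtain ⟨q, rfl⟩ : ∃ q, p = q + 1 := ⟨p - 1, by omega⟩
    have hq : q ≤ k := by omega
    have := T_iter α hα T h1 k q (by omega) (T y) hTy
    rw [← Function.iterate_succ_apply] at this
    have e2 : k + 1 - q = (k - q) + 1 := by omega
    rw [e2] at this
    have hle : T^[q+1] y ≤ 1/2 := le_trans this.2 (w_le_half α hα (k - q))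
    exact absurd hpS.1 (not_lt.mpr hle)

lemma w_cover (t : ℝ) (ht : t ∈ Set.Ioc (0:ℝ) 1) :
    ∃ k, t ∈ Set.Ioc (w α hα (k+1)) (w α hα k) := by
  have hev : ∀ᶠ n in atTop, w α hα (n+1) < t :=
    ((tendsto_add_atTop_iff_nat 1).mpr (w_tendsto_zero α hα)).eventually_lt_const ht.1
  have hne : {k | w α hα (k+1) < t}.Nonempty := hev.exists
  set A := {k | w α hα (k+1) < t} with hA
  have hmem : w α hα (sInf A + 1) < t := Nat.sInf_mem hne
  refine ⟨sInf A, hmem, ?_⟩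
  rcases h : sInf A with _ | j
  · rw [w_zero α hα]; exact ht.2
  · have hj : j ∉ A := Nat.notMem_of_lt_sInf (by omega)
    exact not_lt.mp hj

end Dynamics

lemma In_eq (α : ℝ) (hα : 0 < α) (T : ℝ → ℝ)
    (h1 : ∀ x ∈ Set.Ioc (0:ℝ) (1/2), T x = x * (1 + 2 ^ α * x ^ α))
    (h2 : ∀ x ∈ Set.Ioc (1/2:ℝ) 1, T x = 2 * x - 1)
    (φ : ℝ → ℕ)
    (hφ : ∀ y ∈ Set.Ioc (1/2:ℝ) 1,
      φ y = sInf {n : ℕ | 1 ≤ n ∧ T^[n] y ∈ Set.Ioc (1/2:ℝ) 1})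
    (m : ℕ) :
    {y : ℝ | y ∈ Set.Ioc (1/2:ℝ) 1 ∧ φ y = m+2}
      = Set.Ioc ((1 + w α hα (m+2))/2) ((1 + w α hα (m+1))/2) := by
  ext y
  simp only [Set.mem_setOf_eq, Set.mem_Ioc]
  constructor
  · rintro ⟨hy, hphi⟩
    have hTy : T y = 2*y - 1 := h2 y hy
    have hT : T y ∈ Set.Ioc (0:ℝ) 1 := by
      rw [hTy]; exact ⟨by linarith [hy.1], by linarith [hy.2]⟩
    obtain ⟨k, hk⟩ := w_cover α hα (T y) hT
    have hphik := phi_eq α hα T h1 φ hφ k hy hk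
    have hk2 : k = m + 1 := by omega
    subst hk2
    rw [hTy] at hk
    exact ⟨by linarith [hk.1], by linarith [hk.2]⟩
  · intro hy
    have hw2 := w_pos α hα (m+2)
    have hw1 := w_le_one α hα (m+1)
    have hyS : y ∈ Set.Ioc (1/2:ℝ) 1 := ⟨by linarith [hy.1], by linarith [hy.2]⟩
    have hTy : T y = 2*y - 1 := h2 y hyS
    have hmem : T y ∈ Set.Ioc (w α hα (m+2)) (w α hα (m+1)) := by
      rw [hTy]; exact ⟨by linarith [hy.1], by linarith [hy.2]⟩
    exact ⟨hyS, phi_eq α hα T h1 φ hφ (m+1) hyS hmem⟩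

/-- Asymptotics of the first-return intervals: `|I_n| ∼ c / n^{β+1}` with `β = 1/α`,
i.e. `|I_n| · n^{β+1} → c` for some `c > 0`. -/
theorem return_interval_asymptotics (α : ℝ) (hα : α ∈ Set.Ioo (0:ℝ) 1) (T : ℝ → ℝ)
    (h1 : ∀ x ∈ Set.Ioc (0:ℝ) (1/2), T x = x * (1 + 2 ^ α * x ^ α))
    (h2 : ∀ x ∈ Set.Ioc (1/2:ℝ) 1, T x = 2 * x - 1)
    (φ : ℝ → ℕ)
    (hφ : ∀ y ∈ Set.Ioc (1/2:ℝ) 1,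
      φ y = sInf {n : ℕ | 1 ≤ n ∧ T^[n] y ∈ Set.Ioc (1/2:ℝ) 1}) :
    ∃ c : ℝ, 0 < c ∧
      Filter.Tendsto
        (fun n : ℕ => (volume {y : ℝ | y ∈ Set.Ioc (1/2:ℝ) 1 ∧ φ y = n}).toReal *
          (n : ℝ) ^ (1/α + 1)) Filter.atTop (nhds c) := by
  obtain ⟨hα0, _⟩ := hα
  set L := (α * 2 ^ α) ^ (-(1/α)) with hL
  have hLpos : 0 < L := Real.rpow_pos_of_pos (by positivity) _
  have hcpos : (0:ℝ) < 2 ^ α / 2 * L ^ (1+α) := by positivity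
  refine ⟨2 ^ α / 2 * L ^ (1+α), hcpos, ?_⟩
  rw [← tendsto_add_atTop_iff_nat 2]
  have hc : ContinuousAt (fun x : ℝ => x ^ (1+α)) L :=
    Real.continuousAt_rpow_const _ _ (Or.inl hLpos.ne')
  have hlim : Tendsto (fun m : ℕ => 2 ^ α / 2 * (w α hα0 (m+2) * ((m:ℝ)+2) ^ (1/α)) ^ (1+α))
      atTop (nhds (2 ^ α / 2 * L ^ (1+α))) :=
    (hc.tendsto.comp (w_mul_rpow_tendsto2 α hα0)).const_mul _
  refine hlim.congr fun m => ?_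
  -- compute the measure
  have hw2 := w_pos α hα0 (m+2)
  have hw1 := w_pos α hα0 (m+1)
  have hlt : w α hα0 (m+2) < w α hα0 (m+1) := w_lt α hα0 (m+1)
  rw [In_eq α hα0 T h1 h2 φ hφ m]
  have hvol : (volume (Set.Ioc ((1 + w α hα0 (m+2))/2) ((1 + w α hα0 (m+1))/2))).toReal
      = (w α hα0 (m+1) - w α hα0 (m+2)) / 2 := by
    rw [Real.volume_Ioc, ENNReal.toReal_ofReal (by linarith)]
    ring
  rw [hvol]
  have hdiff : w α hα0 (m+1) - w α hα0 (m+2) = 2 ^ α * (w α hα0 (m+2)) ^ (1+α) := by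
    have := gPM_w α hα0 (m+1)
    rw [gPM] at this
    linarith
  rw [hdiff]
  have hcast : ((↑(m+2) : ℝ)) = (m:ℝ) + 2 := by push_cast; ring
  rw [hcast]
  have hrpow : ((m:ℝ)+2) ^ (1/α + 1) = (((m:ℝ)+2) ^ (1/α)) ^ (1+α) := by
    rw [← Real.rpow_mul (by positivity)]
    congr 1
    field_simp
  rw [hrpow, Real.mul_rpow hw2.le (Real.rpow_nonneg (by positivity) _)]
  ring
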